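/- arXiv:2306.14223 — 4 statements merged into one kernel-verified Lean document; each statement's English description precedes it below -/
import Mathlib

section
/- Let R be a semiprimary ring and e an idempotent of R. If the quotient ring R/ReR is quasi-hereditary, then there exists a finite chain of two-sided ideals R = I₀ ⊇ I₁ ⊇ ⋯ ⊇ I_l = ReR of R such that for each i ∈ [0, l−1] the image of I_i in R/I_{i+1} is a heredity ideal of R/I_{i+1}. -/
/-! Basic definitions: semiprimary rings, heredity ideals, quasi-hereditary rings. -/

variable {R : Type*} [Ring R]

/-- The two-sided ideal `ReR` generated by an element `e`. -/
def TwoSidedIdeal.gen (e : R) : TwoSidedIdeal R := TwoSidedIdeal.span {e}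

/-- A two-sided ideal is idempotent if it equals the two-sided ideal generated by
all products of two of its elements. -/
def TwoSidedIdeal.IsIdem (I : TwoSidedIdeal R) : Prop :=
  TwoSidedIdeal.span {y : R | ∃ a ∈ I, ∃ b ∈ I, y = a * b} = I

/-- A ring is semiprimary if its Jacobson radical `J` is nilpotent and `R/J` is semisimple.
(The Jacobson radical is always a two-sided ideal; we phrase this via the existence of a
two-sided ideal whose underlying set is the Jacobson radical.) -/
def IsSemiprimary (R : Type*) [Ring R] : Prop :=
  ∃ J : TwoSidedIdeal R, (J : Set R) = (Ideal.jacobson (⊥ : Ideal R) : Set R) ∧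
    (∃ k : ℕ, ∀ x : Fin (k + 1) → R, (∀ i, x i ∈ J) → (List.ofFn x).prod = 0) ∧
    IsSemisimpleRing J.ringCon.Quotient

/-- A heredity ideal: an idempotent two-sided ideal `H` which is projective as a right
`R`-module and satisfies `H · J(R) · H = 0`. -/
def IsHeredityIdeal (H : TwoSidedIdeal R) : Prop :=
  H.IsIdem ∧ Module.Projective Rᵐᵒᵖ H ∧
    ∀ a ∈ H, ∀ j ∈ Ideal.jacobson (⊥ : Ideal R), ∀ b ∈ H, a * j * b = 0

/-- A heredity chain is a finite decreasing chain of two-sided ideals from `R` to `0` such that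
each successive subquotient, viewed in the corresponding quotient ring, is a heredity ideal. -/
def IsHeredityChain {m : ℕ} (H : Fin (m + 1) → TwoSidedIdeal R) : Prop :=
  H 0 = ⊤ ∧ H (Fin.last m) = ⊥ ∧ Antitone H ∧
    ∀ i : Fin m, IsHeredityIdeal (TwoSidedIdeal.map (H i.succ).ringCon.mk' (H i.castSucc))

/-- A ring is quasi-hereditary if it is semiprimary and admits a heredity chain. -/
def IsQuasiHereditary (R : Type*) [Ring R] : Prop :=
  IsSemiprimary R ∧ ∃ (m : ℕ) (H : Fin (m + 1) → TwoSidedIdeal R), IsHeredityChain H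


section Aux
namespace QH
open TwoSidedIdeal

variable {S T U : Type*} [Ring S] [Ring T] [Ring U]

lemma span_le {s : Set S} {K : TwoSidedIdeal S} : span s ≤ K ↔ s ⊆ K :=
  ⟨fun h x hx => h (subset_span hx), fun h x hx => mem_span_iff.1 hx K h⟩

lemma span_coe (I : TwoSidedIdeal S) : span (I : Set S) = I :=
  le_antisymm (span_le.2 fun _ hx => hx) fun _ hx => subset_span hx

lemma map_le {f : S →+* T} {I : TwoSidedIdeal S} {K : TwoSidedIdeal T} :
    TwoSidedIdeal.map f I ≤ K ↔ ∀ x ∈ I, f x ∈ K := by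
  rw [TwoSidedIdeal.map, span_le, Set.image_subset_iff]
  rfl

lemma mem_map_of_mem (f : S →+* T) {I : TwoSidedIdeal S} {x : S} (h : x ∈ I) :
    f x ∈ TwoSidedIdeal.map f I :=
  subset_span ⟨x, h, rfl⟩

lemma map_map (g : T →+* U) (f : S →+* T) (I : TwoSidedIdeal S) :
    TwoSidedIdeal.map g (TwoSidedIdeal.map f I) = TwoSidedIdeal.map (g.comp f) I := by
  apply le_antisymm
  · rw [map_le]
    intro x hx
    have h1 : TwoSidedIdeal.map f I ≤ TwoSidedIdeal.comap g (TwoSidedIdeal.map (g.comp f) I) :=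
      map_le.2 fun a ha => (mem_comap g).2 (mem_map_of_mem (g.comp f) ha)
    exact (mem_comap g).1 (h1 hx)
  · rw [map_le]
    intro x hx
    exact mem_map_of_mem g (mem_map_of_mem f hx)

lemma map_id (I : TwoSidedIdeal S) : TwoSidedIdeal.map (RingHom.id S) I = I := by
  apply le_antisymm (map_le.2 fun x hx => hx) fun x hx => mem_map_of_mem (RingHom.id S) hx

lemma map_span (f : S →+* T) (s : Set S) :
    TwoSidedIdeal.map f (span s) = span (⇑f '' s) := by
  apply le_antisymm
  · rw [map_le]
    intro x hx
    have h1 : span s ≤ TwoSidedIdeal.comap f (span (⇑f '' s)) :=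
      span_le.2 fun a ha => (mem_comap f).2 (subset_span (Set.mem_image_of_mem f ha))
    exact (mem_comap f).1 (h1 hx)
  · refine span_le.2 ?_
    rintro _ ⟨a, ha, rfl⟩
    exact mem_map_of_mem f (subset_span ha)

lemma mem_map_ringEquiv {g : S ≃+* T} {I : TwoSidedIdeal S} {y : T} :
    y ∈ TwoSidedIdeal.map (g : S →+* T) I ↔ g.symm y ∈ I := by
  constructor
  · intro hy
    have h1 : TwoSidedIdeal.map (g : S →+* T) I ≤ TwoSidedIdeal.comap (g.symm : T →+* S) I :=
      map_le.2 fun a ha => (mem_comap _).2 (by simpa using ha)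
    exact (mem_comap _).1 (h1 hy)
  · intro hy
    have := mem_map_of_mem (g : S →+* T) hy
    simpa using this

lemma map_comap_of_surjective (f : S →+* T) (hf : Function.Surjective f)
    (K : TwoSidedIdeal T) : TwoSidedIdeal.map f (TwoSidedIdeal.comap f K) = K := by
  apply le_antisymm (map_le.2 fun x hx => (mem_comap f).1 hx)
  intro x hx
  obtain ⟨y, rfl⟩ := hf x
  exact mem_map_of_mem f ((mem_comap f).2 hx)

end QH

namespace QH

variable {R' Q' : Type*} [Ring R'] [Ring Q']

/-- Lift a ring hom whose "kernel congruence" is exactly `c` to a ring hom from the quotient. -/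
def lift (c : RingCon R') (ψ : R' →+* Q') (key : ∀ x y, c x y → ψ x = ψ y) :
    c.Quotient →+* Q' where
  toFun := Quotient.lift ψ (fun x y h => key x y h)
  map_one' := map_one ψ
  map_zero' := map_zero ψ
  map_mul' := fun x y => Quotient.inductionOn₂' x y fun a b => map_mul ψ a b
  map_add' := fun x y => Quotient.inductionOn₂' x y fun a b => map_add ψ a b

@[simp] lemma lift_mk (c : RingCon R') (ψ : R' →+* Q') (key) (x : R') :
    lift c ψ key (c.mk' x) = ψ x := rfl

/-- First isomorphism: quotient by the congruence induced by a surjective ring hom. -/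
noncomputable def quotEquiv (c : RingCon R') (ψ : R' →+* Q') (hsurj : Function.Surjective ψ)
    (key : ∀ x y, c x y ↔ ψ x = ψ y) : c.Quotient ≃+* Q' :=
  RingEquiv.ofBijective (lift c ψ fun x y h => (key x y).1 h)
    ⟨fun x y => Quotient.inductionOn₂' x y fun a b h => by
        have : c a b := (key a b).2 h
        exact Quotient.sound' this,
     fun q => by
        obtain ⟨x, rfl⟩ := hsurj q
        exact ⟨c.mk' x, rfl⟩⟩

@[simp] lemma quotEquiv_mk (c : RingCon R') (ψ : R' →+* Q') (hsurj) (key) (x : R') :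
    quotEquiv c ψ hsurj key (c.mk' x) = ψ x := rfl

end QH

namespace QH
open TwoSidedIdeal
variable {S T U : Type*} [Ring S] [Ring T] [Ring U]
lemma jacobson_mem_of_ringEquiv (g : S ≃+* T) {j : T}
    (hj : j ∈ Ideal.jacobson (⊥ : Ideal T)) :
    g.symm j ∈ Ideal.jacobson (⊥ : Ideal S) := by
  have h0 : Ideal.comap (g.symm : T →+* S) (⊥ : Ideal S) = ⊥ := by
    ext x
    simp [Ideal.mem_comap, map_eq_zero_iff _ g.symm.injective]
  have h1 := Ideal.comap_jacobson_of_surjective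
    (f := (g.symm : T →+* S)) g.symm.surjective (K := (⊥ : Ideal S))
  rw [h0] at h1
  rw [← h1] at hj
  exact Ideal.mem_comap.1 hj

lemma isHeredityIdeal_map (g : S ≃+* T) {K : TwoSidedIdeal S} (hK : IsHeredityIdeal K) :
    IsHeredityIdeal (TwoSidedIdeal.map (g : S →+* T) K) := by
  obtain ⟨hidem, hproj, hJ⟩ := hK
  set K' := TwoSidedIdeal.map (g : S →+* T) K with hK'
  refine ⟨?_, ?_, ?_⟩
  · unfold TwoSidedIdeal.IsIdem at hidem ⊢
    have hset : {y : T | ∃ a ∈ K', ∃ b ∈ K', y = a * b}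
        = ⇑(g : S →+* T) '' {y : S | ∃ a ∈ K, ∃ b ∈ K, y = a * b} := by
      ext y
      constructor
      · rintro ⟨a, ha, b, hb, rfl⟩
        exact ⟨g.symm a * g.symm b,
          ⟨g.symm a, mem_map_ringEquiv.1 ha, g.symm b, mem_map_ringEquiv.1 hb, rfl⟩,
          by simp⟩
      · rintro ⟨y, ⟨a, ha, b, hb, rfl⟩, rfl⟩
        refine ⟨g a, ?_, g b, ?_, by simp⟩
        · simpa using mem_map_of_mem (g : S →+* T) ha
        · simpa using mem_map_of_mem (g : S →+* T) hb
    rw [hset, ← map_span, hidem]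
  · haveI := hproj
    haveI := RingHomInvPair.of_ringEquiv (RingEquiv.op g)
    haveI := RingHomInvPair.of_ringEquiv (RingEquiv.op g).symm
    refine Module.Projective.of_ringEquiv (M := K) (N := K') (σ := ((RingEquiv.op g : Sᵐᵒᵖ ≃+* Tᵐᵒᵖ) : Sᵐᵒᵖ →+* Tᵐᵒᵖ)) (σ' := (((RingEquiv.op g).symm : Tᵐᵒᵖ ≃+* Sᵐᵒᵖ) : Tᵐᵒᵖ →+* Sᵐᵒᵖ)) ?_
    refine
      { toFun := fun x => ⟨g x, by simpa using mem_map_of_mem (g : S →+* T) x.2⟩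
        invFun := fun y => ⟨g.symm y, mem_map_ringEquiv.1 y.2⟩
        left_inv := fun x => by ext; simp
        right_inv := fun y => by ext; simp
        map_add' := fun x y => by ext; simp
        map_smul' := fun r x => by
          ext
          show g ((x : S) * r.unop) = _
          rw [map_mul]
          rfl }
  · rintro a ha j hj b hb
    have ha' := mem_map_ringEquiv.1 ha
    have hb' := mem_map_ringEquiv.1 hb
    have hj' := jacobson_mem_of_ringEquiv g hj
    have h0 := hJ _ ha' _ hj' _ hb'
    calc a * j * b = g (g.symm a * g.symm j * g.symm b) := by simp
    _ = 0 := by rw [h0, map_zero]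

end QH
end Aux

/-- Let `R` be a semiprimary ring and `e` an idempotent of `R`. If the quotient ring
`R/ReR` is quasi-hereditary, then there is a finite chain of two-sided ideals from `R`
down to `ReR` whose successive subquotients are heredity ideals of the corresponding
quotient rings. -/
theorem exists_heredity_chain_to_gen (hR : IsSemiprimary R) (e : R)
    (he : IsIdempotentElem e)
    (h : IsQuasiHereditary (TwoSidedIdeal.gen e).ringCon.Quotient) :
    ∃ (l : ℕ) (I : Fin (l + 1) → TwoSidedIdeal R),
      I 0 = ⊤ ∧ I (Fin.last l) = TwoSidedIdeal.gen e ∧ Antitone I ∧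
      ∀ i : Fin l,
        IsHeredityIdeal (TwoSidedIdeal.map (I i.succ).ringCon.mk' (I i.castSucc)) := by
  obtain ⟨-, m, H, hH0, hHlast, hHanti, hHher⟩ := h
  let π : R →+* (TwoSidedIdeal.gen e).ringCon.Quotient := (TwoSidedIdeal.gen e).ringCon.mk'
  have hπsurj : Function.Surjective π := fun q => Quotient.inductionOn' q fun x => ⟨x, rfl⟩
  refine ⟨m, fun i => TwoSidedIdeal.comap π (H i), ?_, ?_, ?_, ?_⟩
  · refine SetLike.ext fun x => ⟨fun _ => trivial, fun _ => ?_⟩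
    refine (TwoSidedIdeal.mem_comap π).2 ?_
    rw [hH0]
    trivial
  · refine SetLike.ext fun x => ?_
    constructor
    · intro hx
      have h1 := (TwoSidedIdeal.mem_comap π).1 hx
      rw [hHlast, TwoSidedIdeal.mem_bot] at h1
      have h2 : π x = π 0 := by rw [h1, map_zero]
      exact ((TwoSidedIdeal.gen e).ringCon.eq).1 h2
    · intro hx
      refine (TwoSidedIdeal.mem_comap π).2 ?_
      rw [hHlast, TwoSidedIdeal.mem_bot]
      have h2 : (TwoSidedIdeal.gen e).ringCon x 0 := hx
      have h3 := ((TwoSidedIdeal.gen e).ringCon.eq).2 h2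
      have h4 : π x = π 0 := h3
      rw [h4, map_zero]
  · intro i j hij x hx
    exact (TwoSidedIdeal.mem_comap π).2 (hHanti hij ((TwoSidedIdeal.mem_comap π).1 hx))
  · intro i
    let c := (TwoSidedIdeal.comap π (H i.succ)).ringCon
    let ψ : R →+* (H i.succ).ringCon.Quotient := ((H i.succ).ringCon.mk').comp π
    have hmksurj : Function.Surjective (H i.succ).ringCon.mk' :=
      fun q => Quotient.inductionOn' q fun x => ⟨x, rfl⟩
    have hψsurj : Function.Surjective ψ := by
      intro q
      obtain ⟨x, rfl⟩ := hmksurj q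
      obtain ⟨y, rfl⟩ := hπsurj x
      exact ⟨y, rfl⟩
    have key : ∀ x y, c x y ↔ ψ x = ψ y := by
      intro x y
      show (H i.succ).ringCon (π x) (π y) ↔ ψ x = ψ y
      exact ((H i.succ).ringCon.eq).symm
    let φ := QH.quotEquiv c ψ hψsurj key
    have hcomp : (φ : c.Quotient →+* (H i.succ).ringCon.Quotient).comp c.mk' = ψ :=
      RingHom.ext fun x => rfl
    have h1 : TwoSidedIdeal.map (φ : c.Quotient →+* (H i.succ).ringCon.Quotient)
        (TwoSidedIdeal.map c.mk' (TwoSidedIdeal.comap π (H i.castSucc)))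
        = TwoSidedIdeal.map (H i.succ).ringCon.mk' (H i.castSucc) := by
      rw [QH.map_map, hcomp]
      show TwoSidedIdeal.map (((H i.succ).ringCon.mk').comp π) _ = _
      rw [← QH.map_map, QH.map_comap_of_surjective π hπsurj]
    have h2 : TwoSidedIdeal.map ((φ.symm : _ →+* c.Quotient).comp
          (φ : c.Quotient →+* (H i.succ).ringCon.Quotient))
        (TwoSidedIdeal.map c.mk' (TwoSidedIdeal.comap π (H i.castSucc)))
        = TwoSidedIdeal.map c.mk' (TwoSidedIdeal.comap π (H i.castSucc)) := by
      rw [show (φ.symm : _ →+* c.Quotient).comp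
          (φ : c.Quotient →+* (H i.succ).ringCon.Quotient) = RingHom.id c.Quotient from
        RingHom.ext fun x => φ.symm_apply_apply x, QH.map_id]
    rw [← QH.map_map, h1] at h2
    show IsHeredityIdeal (TwoSidedIdeal.map c.mk' (TwoSidedIdeal.comap π (H i.castSucc)))
    rw [← h2]
    exact QH.isHeredityIdeal_map φ.symm (hHher i)
end

section
/- Let R be a semiprimary ring and I a two-sided ideal of R with I² = I. Then there exists an idempotent e ∈ R such that I = ReR. -/
/-! Basic definitions: semiprimary rings, heredity ideals, quasi-hereditary rings. -/

variable {R : Type*} [Ring R]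

section AuxLemmas

variable {R : Type*} [Ring R]

private lemma aux_semisimple_ideal {Q : Type*} [Ring Q] [IsSemisimpleRing Q] (L : Ideal Q) :
    ∃ f : Q, f * f = f ∧ f ∈ L ∧ ∀ x ∈ L, x = x * f := by
  obtain ⟨L', hcompl⟩ := exists_isCompl L
  have h1 : (1 : Q) ∈ L ⊔ L' := by rw [hcompl.sup_eq_top]; trivial
  obtain ⟨f, hf, g, hg, hfg⟩ := Submodule.mem_sup.mp h1
  have key : ∀ x ∈ L, x = x * f := by
    intro x hx
    have hsum : x * f + x * g = x := by rw [← mul_add, hfg, mul_one]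
    have hxg : x - x * f = x * g := by rw [sub_eq_iff_eq_add']; exact hsum.symm
    have hmem : x - x * f ∈ L ⊓ L' := by
      constructor
      · exact sub_mem hx (L.smul_mem x hf)
      · rw [hxg]; exact L'.smul_mem x hg
    rw [hcompl.inf_eq_bot, Submodule.mem_bot] at hmem
    exact sub_eq_zero.mp hmem
  exact ⟨f, (key f hf).symm, hf, key⟩

private lemma aux_jac_pow_eq_bot (J : TwoSidedIdeal R)
    (hJ : (J : Set R) = (Ideal.jacobson (⊥ : Ideal R) : Set R)) (k : ℕ)
    (hnil : ∀ x : Fin (k + 1) → R, (∀ i, x i ∈ J) → (List.ofFn x).prod = 0) :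
    (Ideal.jacobson (⊥ : Ideal R)) ^ (k + 1) = ⊥ := by
  set Jl := Ideal.jacobson (⊥ : Ideal R) with hJl
  have hmemJ : ∀ y : R, y ∈ J ↔ y ∈ Jl := by
    intro y
    simpa using Set.ext_iff.mp hJ y
  have key : ∀ n : ℕ, Jl ^ (n + 1) ≤ Ideal.span
      {p : R | ∃ x : Fin (n + 1) → R, (∀ i, x i ∈ J) ∧ p = (List.ofFn x).prod} := by
    intro n
    induction n with
    | zero =>
      rw [zero_add, Submodule.pow_one]
      intro j hj
      exact Ideal.subset_span ⟨![j], fun i => by simpa using (hmemJ j).mpr hj, by simp⟩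
    | succ n ih =>
      rw [Submodule.pow_succ, Submodule.mul_le]
      intro r hr j hj
      have hr' := ih hr
      clear hr
      induction hr' using Submodule.span_induction with
      | mem p hp =>
        obtain ⟨x, hx, rfl⟩ := hp
        refine Ideal.subset_span ⟨Fin.snoc x j, ?_, ?_⟩
        · intro i
          refine Fin.lastCases ?_ ?_ i
          · simpa using (hmemJ j).mpr hj
          · intro i; simpa using hx i
        · rw [List.ofFn_succ' (Fin.snoc x j)]
          simp [mul_assoc]
      | zero => simpa using (Ideal.span _).zero_mem
      | add a b _ _ ha hb => rw [add_mul]; exact add_mem ha hb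
      | smul c a _ ha => rw [smul_mul_assoc]; exact Submodule.smul_mem _ c ha
  have h0 : Ideal.span
      {p : R | ∃ x : Fin (k + 1) → R, (∀ i, x i ∈ J) ∧ p = (List.ofFn x).prod} ≤ ⊥ := by
    rw [Ideal.span_le]
    rintro p ⟨x, hx, rfl⟩
    simpa using hnil x hx
  exact le_bot_iff.mp ((key k).trans h0)

end AuxLemmas

/-- In a semiprimary ring, every idempotent two-sided ideal is generated by an idempotent
element. -/
theorem exists_idempotent_gen_of_isIdem (hR : IsSemiprimary R) (I : TwoSidedIdeal R)
    (hI : I.IsIdem) :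
    ∃ e : R, IsIdempotentElem e ∧ I = TwoSidedIdeal.gen e := by
  classical
  obtain ⟨J, hJ, ⟨k, hnil⟩, hss⟩ := hR
  haveI : IsSemisimpleRing J.ringCon.Quotient := hss
  set Jl := Ideal.jacobson (⊥ : Ideal R) with hJldef
  have hmemJ : ∀ y : R, y ∈ J ↔ y ∈ Jl := by
    intro y
    simpa using Set.ext_iff.mp hJ y
  have hJpow : Jl ^ (k + 1) = ⊥ := aux_jac_pow_eq_bot J hJ k hnil
  set π : R →+* J.ringCon.Quotient := J.ringCon.mk' with hπdef
  have hsurj : Function.Surjective π := fun q => Quotient.inductionOn' q fun x => ⟨x, rfl⟩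
  have hker : ∀ y : R, π y = 0 ↔ y ∈ Jl := by
    intro y
    have : π y = π 0 ↔ J.ringCon y 0 := J.ringCon.eq
    rw [map_zero] at this
    rw [this, ← TwoSidedIdeal.mem_iff, hmemJ]
  -- the image of `I` in the semisimple quotient
  set A : Ideal R := TwoSidedIdeal.asIdeal I with hAdef
  have hmemA : ∀ y : R, y ∈ A ↔ y ∈ I := fun y => TwoSidedIdeal.mem_asIdeal
  obtain ⟨f, hff, hfL, hL⟩ := aux_semisimple_ideal (Ideal.map π A)
  obtain ⟨x, hxA, hπx⟩ := (Ideal.mem_map_iff_of_surjective π hsurj).mp hfL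
  -- lift `f` to an idempotent in `I`
  have hlift : ∀ n : ℕ, ∃ a : R, a ∈ I ∧ π a = f ∧ a * a - a ∈ Jl ^ (n + 1) := by
    intro n
    induction n with
    | zero =>
      refine ⟨x, (hmemA x).mp hxA, hπx, ?_⟩
      rw [zero_add, Submodule.pow_one, ← hker]
      rw [map_sub, map_mul, hπx, hff, sub_self]
    | succ n ih =>
      obtain ⟨a, haI, hπa, ht⟩ := ih
      refine ⟨3 * (a * a) - 2 * (a * (a * a)), ?_, ?_, ?_⟩
      · exact sub_mem (I.mul_mem_left 3 (a * a) (I.mul_mem_left a a haI))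
          (I.mul_mem_left 2 (a * (a * a)) (I.mul_mem_left a (a * a) (I.mul_mem_left a a haI)))
      · have h3 : π (3 * (a * a) - 2 * (a * (a * a)))
            = 3 * (π a * π a) - 2 * (π a * (π a * π a)) := by
          simp [map_sub, map_mul, map_ofNat]
        rw [h3, hπa, hff, hff]
        noncomm_ring
      · have hident : (3 * (a * a) - 2 * (a * (a * a))) * (3 * (a * a) - 2 * (a * (a * a)))
            - (3 * (a * a) - 2 * (a * (a * a)))
            = (4 * (a * a) - 4 * a - 3) * ((a * a - a) * (a * a - a)) := by
          noncomm_ring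
        rw [hident]
        have hJle : Jl ^ (n + 1) ≤ Jl := by
          rw [Submodule.pow_succ]
          exact Submodule.mul_le.mpr fun m _ j hj => Jl.smul_mem m hj
        have h2 : (a * a - a) * (a * a - a) ∈ Jl ^ (n + 1) * Jl :=
          Submodule.mul_mem_mul ht (hJle ht)
        rw [← Submodule.pow_succ] at h2
        exact Submodule.smul_mem _ _ h2
  obtain ⟨e, heI, hπe, hesq⟩ := hlift k
  rw [hJpow, Submodule.mem_bot, sub_eq_zero] at hesq
  refine ⟨e, hesq, ?_⟩
  set G : Ideal R := TwoSidedIdeal.asIdeal (TwoSidedIdeal.gen e) with hGdef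
  have hmemG : ∀ y : R, y ∈ G ↔ y ∈ TwoSidedIdeal.gen e := fun y => TwoSidedIdeal.mem_asIdeal
  have heG : e ∈ TwoSidedIdeal.gen e := TwoSidedIdeal.subset_span rfl
  -- I ≤ G ⊔ Jl
  have hC1 : A ≤ G ⊔ Jl := by
    intro a ha
    have hπaL : π a ∈ Ideal.map π A := Ideal.mem_map_of_mem π ha
    have h1 : π a = π a * f := hL _ hπaL
    have hfG : f ∈ Ideal.map π G := by
      rw [← hπe]; exact Ideal.mem_map_of_mem π ((hmemG e).mpr heG)
    have h2 : π a ∈ Ideal.map π G := by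
      rw [h1]; exact (Ideal.map π G).smul_mem (π a) hfG
    have h3 : a ∈ Ideal.comap π (Ideal.map π G) := h2
    rw [Ideal.comap_map_of_surjective π hsurj] at h3
    have hkerEq : Ideal.comap π (⊥ : Ideal J.ringCon.Quotient) = Jl := by
      ext y
      rw [Ideal.mem_comap, Submodule.mem_bot]
      exact hker y
    rwa [hkerEq] at h3
  -- A ≤ A * A
  have hA2 : A ≤ A * A := by
    intro a ha
    have haspan : a ∈ TwoSidedIdeal.span {y : R | ∃ a ∈ I, ∃ b ∈ I, y = a * b} := by
      rw [hI]; exact (hmemA a).mp ha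
    rw [TwoSidedIdeal.mem_span_iff] at haspan
    have hright : ∀ y : R, ∀ x ∈ A * A, x * y ∈ A * A := by
      intro y x hx
      refine Submodule.mul_induction_on hx (fun m hm n hn => ?_) (fun s t hs ht => ?_)
      · rw [mul_assoc]
        exact Submodule.mul_mem_mul hm ((hmemA _).mpr (I.mul_mem_right _ _ ((hmemA _).mp hn)))
      · rw [add_mul]; exact add_mem hs ht
    let T : TwoSidedIdeal R := TwoSidedIdeal.mk' (A * A : Ideal R)
      (zero_mem _) (fun h1 h2 => add_mem h1 h2) (fun h => neg_mem h)
      (fun {s t} h => Submodule.smul_mem _ s h) (fun {s t} h => hright t s h)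
    have : a ∈ T := by
      refine haspan T ?_
      rintro y ⟨c, hc, d, hd, rfl⟩
      rw [SetLike.mem_coe, TwoSidedIdeal.mem_mk']
      exact Submodule.mul_mem_mul ((hmemA c).mpr hc) ((hmemA d).mpr hd)
    rwa [TwoSidedIdeal.mem_mk'] at this
  -- G absorbs multiplication on both sides
  have hGA : G * A ≤ G := Submodule.mul_le.mpr fun g hg a _ =>
    (hmemG _).mpr ((TwoSidedIdeal.gen e).mul_mem_right _ _ ((hmemG g).mp hg))
  -- base iteration: A ≤ G ⊔ Jl * A
  have hbase : A ≤ G ⊔ Jl ^ 1 * A := by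
    rw [Submodule.pow_one]
    calc A ≤ A * A := hA2
    _ ≤ (G ⊔ Jl) * A := Submodule.mul_le.mpr fun m hm n hn => Submodule.mul_mem_mul (hC1 hm) hn
    _ = G * A ⊔ Jl * A := Submodule.sup_mul G Jl A
    _ ≤ G ⊔ Jl * A := sup_le_sup_right hGA _
  have hiter : ∀ n : ℕ, A ≤ G ⊔ Jl ^ (n + 1) * A := by
    intro n
    induction n with
    | zero => exact hbase
    | succ n ih =>
      refine ih.trans ?_
      have h1 : Jl ^ (n + 1) * A ≤ Jl ^ (n + 1) * (G ⊔ Jl ^ 1 * A) :=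
        Submodule.mul_le.mpr fun m hm n hn => Submodule.mul_mem_mul hm (hbase hn)
      have h2 : Jl ^ (n + 1) * (G ⊔ Jl ^ 1 * A) = Jl ^ (n + 1) * G ⊔ Jl ^ (n + 1) * (Jl ^ 1 * A) :=
        Submodule.mul_sup _ _ _
      have h3 : Jl ^ (n + 1) * G ≤ G := Submodule.mul_le.mpr fun m _ g hg => G.smul_mem m hg
      have h4 : Jl ^ (n + 1) * (Jl ^ 1 * A) = Jl ^ (n + 1 + 1) * A := by
        rw [Submodule.pow_one, ← mul_assoc, ← Submodule.pow_succ]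
      have : Jl ^ (n + 1) * A ≤ G ⊔ Jl ^ (n + 1 + 1) * A := by
        refine h1.trans ?_
        rw [h2, h4]
        exact sup_le_sup_right h3 _
      exact sup_le le_sup_left this
  have hAG : A ≤ G := by
    have := hiter k
    rw [hJpow] at this
    simpa using this
  -- conclude
  apply le_antisymm
  · intro y hy
    exact (hmemG y).mp (hAG ((hmemA y).mpr hy))
  · intro y hy
    change y ∈ TwoSidedIdeal.span {e} at hy
    rw [TwoSidedIdeal.mem_span_iff] at hy
    exact hy I (by rintro z rfl; exact heI)
end

section
/- If R is a semiprimary ring and n is a positive integer, then the ring T_n(R) of n × n upper triangular matrices with entries in R is semiprimary. -/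
variable {R : Type*} [Ring R]

/-- The subring of `n × n` upper triangular matrices over `R`. -/
def upperTriangular (n : ℕ) (R : Type*) [Ring R] :
    Subring (Matrix (Fin n) (Fin n) R) where
  carrier := {x | ∀ i j : Fin n, j < i → x i j = 0}
  zero_mem' := fun i j _ => rfl
  one_mem' := fun i j h => Matrix.one_apply_ne h.ne'
  add_mem' {x y} hx hy := fun i j h => by
    simp [Matrix.add_apply, hx i j h, hy i j h]
  neg_mem' {x} hx := fun i j h => by simp [Matrix.neg_apply, hx i j h]
  mul_mem' {x y} hx hy := fun i j h => by
    simp only [Matrix.mul_apply]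
    refine Finset.sum_eq_zero fun k _ => ?_
    rcases lt_or_ge j k with hk | hk
    · rw [hy k j hk, mul_zero]
    · rw [hx i k (lt_of_le_of_lt hk h), zero_mul]

namespace UTaux

lemma mem_ut {n : ℕ} {x : Matrix (Fin n) (Fin n) R} :
    x ∈ upperTriangular n R ↔ ∀ i j : Fin n, j < i → x i j = 0 := Iff.rfl

lemma diagMul {n : ℕ} {x y : Matrix (Fin n) (Fin n) R}
    (hx : ∀ i j : Fin n, j < i → x i j = 0) (hy : ∀ i j : Fin n, j < i → y i j = 0)
    (i : Fin n) : (x * y) i i = x i i * y i i := by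
  rw [Matrix.mul_apply]
  apply Finset.sum_eq_single i
  · intro k _ hk
    rcases lt_or_gt_of_ne hk with h | h
    · rw [hx i k h, zero_mul]
    · rw [hy k i h, mul_zero]
  · exact fun h => absurd (Finset.mem_univ i) h

lemma coe_diagMul {n : ℕ} (x y : upperTriangular n R) (i : Fin n) :
    ((x * y : upperTriangular n R) : Matrix (Fin n) (Fin n) R) i i
      = (x : Matrix (Fin n) (Fin n) R) i i * (y : Matrix (Fin n) (Fin n) R) i i := by
  rw [Subring.coe_mul]
  exact diagMul x.2 y.2 i

lemma strictPow {n m : ℕ} {s : Matrix (Fin n) (Fin n) R}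
    (hs : ∀ i j : Fin n, (j : ℕ) ≤ (i : ℕ) → s i j = 0) :
    ∀ i j : Fin n, (j : ℕ) < (i : ℕ) + m → (s ^ m) i j = 0 := by
  induction m with
  | zero => intro i j h; exact Matrix.one_apply_ne (by rintro rfl; omega)
  | succ m ih =>
    intro i j h
    rw [pow_succ, Matrix.mul_apply]
    apply Finset.sum_eq_zero
    intro k _
    rcases lt_or_ge (k : ℕ) ((i : ℕ) + m) with hk | hk
    · rw [ih i k hk, zero_mul]
    · rw [hs k j (by omega), mul_zero]

lemma exists_inv_ut {n : ℕ} {M : Matrix (Fin n) (Fin n) R}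
    (hM : M ∈ upperTriangular n R) (hd : ∀ i, IsUnit (M i i)) :
    ∃ N ∈ upperTriangular n R, M * N = 1 ∧ N * M = 1 := by
  choose u hu using hd
  set D : Matrix (Fin n) (Fin n) R := Matrix.diagonal (fun i => ((u i)⁻¹ : Rˣ)) with hD
  set E : Matrix (Fin n) (Fin n) R := Matrix.diagonal (fun i => (u i : R)) with hE
  have hDE : D * E = 1 := by
    rw [hD, hE, Matrix.diagonal_mul_diagonal]
    convert Matrix.diagonal_one
    simp
  have hED : E * D = 1 := by
    rw [hD, hE, Matrix.diagonal_mul_diagonal]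
    convert Matrix.diagonal_one
    simp
  set s : Matrix (Fin n) (Fin n) R := 1 - D * M with hsdef
  have hDmem : D ∈ upperTriangular n R := fun i j h => Matrix.diagonal_apply_ne _ h.ne'
  have hsmem : s ∈ upperTriangular n R :=
    sub_mem (one_mem _) (mul_mem hDmem hM)
  have hs : ∀ i j : Fin n, (j : ℕ) ≤ (i : ℕ) → s i j = 0 := by
    intro i j h
    rcases eq_or_lt_of_le h with h' | h'
    · have hij : j = i := Fin.ext h'
      subst hij
      have : (D * M) j j = ((u j)⁻¹ : Rˣ) * M j j := by
        rw [hD, Matrix.diagonal_mul]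
      simp only [hsdef, Matrix.sub_apply, Matrix.one_apply_eq, this, ← hu j,
        Units.inv_mul, sub_self]
    · exact hsmem i j (Fin.lt_def.2 h')
  have hsn : s ^ n = 0 := by
    ext i j
    rw [strictPow hs i j (by omega), Matrix.zero_apply]
  set G : Matrix (Fin n) (Fin n) R := ∑ t ∈ Finset.range n, s ^ t with hG
  have hG1 : G * (1 - s) = 1 := by
    have := geom_sum_mul s n
    rw [hsn] at this
    have h2 : G * (s - 1) = -1 := by rw [hG, this, zero_sub]
    calc G * (1 - s) = -(G * (s - 1)) := by rw [← mul_neg, neg_sub]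
      _ = 1 := by rw [h2, neg_neg]
  have hG2 : (1 - s) * G = 1 := by
    have := mul_geom_sum s n
    rw [hsn] at this
    calc (1 - s) * G = -((s - 1) * G) := by rw [← neg_mul, neg_sub]
      _ = 1 := by rw [this, zero_sub, neg_neg]
  have hGmem : G ∈ upperTriangular n R :=
    sum_mem fun t _ => pow_mem hsmem t
  have hDM : D * M = 1 - s := by rw [hsdef]; abel
  have hME : M = E * (1 - s) := by
    rw [← hDM, ← Matrix.mul_assoc, hED, Matrix.one_mul]
  refine ⟨G * D, mul_mem hGmem hDmem, ?_, ?_⟩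
  · rw [hME, Matrix.mul_assoc, ← Matrix.mul_assoc (1 - s), hG2, Matrix.one_mul, hED]
  · rw [hME, ← Matrix.mul_assoc, Matrix.mul_assoc G, hDE, Matrix.mul_one, hG1]

lemma isUnit_ut {n : ℕ} (a : upperTriangular n R)
    (hd : ∀ i, IsUnit ((a : Matrix (Fin n) (Fin n) R) i i)) : IsUnit a := by
  obtain ⟨N, hN, h1, h2⟩ := exists_inv_ut a.2 hd
  exact ⟨⟨a, ⟨N, hN⟩, Subtype.ext (by push_cast; exact h1),
    Subtype.ext (by push_cast; exact h2)⟩, rfl⟩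

lemma isUnit_one_add_of_mem_jacobson {r : R} (h : r ∈ Ideal.jacobson (⊥ : Ideal R)) :
    IsUnit (1 + r) := by
  have key : ∀ a : R, a ∈ Ideal.jacobson (⊥ : Ideal R) → ∃ z : R, z * (1 + a) = 1 := by
    intro a ha
    obtain ⟨z, hz⟩ := Ideal.mem_jacobson_iff.1 ha 1
    rw [Ideal.mem_bot, mul_one, sub_eq_zero] at hz
    exact ⟨z, by rw [mul_add, mul_one, add_comm]; exact hz⟩
  obtain ⟨z, hz1⟩ := key r h
  have hzeq : z = 1 + -(z * r) := by
    have := hz1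
    rw [mul_add, mul_one] at this
    rw [← this]; abel
  obtain ⟨w, hw1⟩ := key (-(z * r)) (neg_mem (Ideal.mul_mem_left _ z h))
  rw [← hzeq] at hw1
  have hweq : w = 1 + r := by
    calc w = w * (z * (1 + r)) := by rw [hz1, mul_one]
      _ = (w * z) * (1 + r) := by rw [mul_assoc]
      _ = 1 + r := by rw [hw1, one_mul]
  exact ⟨⟨1 + r, z, by rw [← hweq]; exact hw1, hz1⟩, rfl⟩

/-- The two-sided ideal of the upper triangular matrix ring consisting of matrices whose
diagonal entries lie in the Jacobson radical. -/
def utJ (n : ℕ) (R : Type*) [Ring R] : TwoSidedIdeal (upperTriangular n R) :=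
  TwoSidedIdeal.mk'
    {x : upperTriangular n R |
      ∀ i, (x : Matrix (Fin n) (Fin n) R) i i ∈ Ideal.jacobson (⊥ : Ideal R)}
    (fun i => by simp)
    (fun {x y} hx hy i => by
      rw [Subring.coe_add, Matrix.add_apply]
      exact add_mem (hx i) (hy i))
    (fun {x} hx i => by
      rw [Subring.coe_neg, Matrix.neg_apply]
      exact neg_mem (hx i))
    (fun {x y} hy i => by
      rw [coe_diagMul]
      exact Ideal.mul_mem_left _ _ (hy i))
    (fun {x y} hx i => by
      rw [coe_diagMul]
      exact Ideal.mul_mem_right _ _ (hx i))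

lemma mem_utJ {n : ℕ} {x : upperTriangular n R} :
    x ∈ utJ n R ↔
      ∀ i, (x : Matrix (Fin n) (Fin n) R) i i ∈ Ideal.jacobson (⊥ : Ideal R) :=
  TwoSidedIdeal.mem_mk' _ _ _ _ _ _ x

lemma utJ_coe (n : ℕ) :
    (utJ n R : Set (upperTriangular n R))
      = (Ideal.jacobson (⊥ : Ideal (upperTriangular n R)) : Set (upperTriangular n R)) := by
  ext x
  rw [SetLike.mem_coe, SetLike.mem_coe, mem_utJ]
  constructor
  · intro hx
    rw [Ideal.mem_jacobson_iff]
    intro Y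
    set a : upperTriangular n R := Y * x with ha
    have haJ : ∀ i, (a : Matrix (Fin n) (Fin n) R) i i ∈ Ideal.jacobson (⊥ : Ideal R) := by
      intro i
      rw [ha, coe_diagMul]
      exact Ideal.mul_mem_left _ _ (hx i)
    have hu : IsUnit ((1 : upperTriangular n R) + a) := by
      apply isUnit_ut
      intro i
      have : (((1 : upperTriangular n R) + a : upperTriangular n R)
          : Matrix (Fin n) (Fin n) R) i i
          = 1 + (a : Matrix (Fin n) (Fin n) R) i i := by
        rw [Subring.coe_add, Matrix.add_apply, Subring.coe_one, Matrix.one_apply_eq]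
      rw [this]
      exact isUnit_one_add_of_mem_jacobson (haJ i)
    obtain ⟨U, hU⟩ := hu
    set z : upperTriangular n R := ((U⁻¹ : (upperTriangular n R)ˣ) : upperTriangular n R)
      with hz
    refine ⟨z, ?_⟩
    rw [Ideal.mem_bot, mul_assoc, ← ha]
    have h1 : z * ((1 : upperTriangular n R) + a) = 1 := by
      rw [← hU, hz]; exact U.inv_mul
    have h2 : z * a + z - 1 = z * (1 + a) - 1 := by
      rw [mul_add, mul_one]; abel
    rw [h2, h1, sub_self]
  · intro hx i
    rw [Ideal.mem_jacobson_iff]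
    intro y
    have hYmem : Matrix.diagonal (Pi.single i y) ∈ upperTriangular n R :=
      fun a b h => Matrix.diagonal_apply_ne _ h.ne'
    set Y : upperTriangular n R := ⟨Matrix.diagonal (Pi.single i y), hYmem⟩ with hY
    obtain ⟨Z, hZ⟩ := Ideal.mem_jacobson_iff.1 hx Y
    rw [Ideal.mem_bot] at hZ
    refine ⟨(Z : Matrix (Fin n) (Fin n) R) i i, ?_⟩
    rw [Ideal.mem_bot]
    have hYii : (Y : Matrix (Fin n) (Fin n) R) i i = y := by
      rw [hY]
      simp [Matrix.diagonal_apply_eq]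
    have e1 : ((Z * Y * x : upperTriangular n R) : Matrix (Fin n) (Fin n) R) i i
        = (Z : Matrix (Fin n) (Fin n) R) i i * y * (x : Matrix (Fin n) (Fin n) R) i i := by
      rw [coe_diagMul (Z * Y) x, coe_diagMul Z Y, hYii]
    have hZm : ((Z * Y * x : upperTriangular n R) : Matrix (Fin n) (Fin n) R)
        + (Z : Matrix (Fin n) (Fin n) R) - 1 = 0 := by
      have h0 := congrArg (Subtype.val) hZ
      push_cast at h0
      exact h0
    have e2 := congrArg (fun m : Matrix (Fin n) (Fin n) R => m i i) hZm
    simp only [Matrix.add_apply, Matrix.sub_apply, Matrix.one_apply_eq,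
      Matrix.zero_apply] at e2
    rw [e1] at e2
    exact e2

end UTaux


def Gc (J : TwoSidedIdeal R) (c : ℕ) : Submodule R R :=
  Submodule.span R {z | ∃ y : Fin c → R, (∀ t, y t ∈ J) ∧ ∃ w, z = (List.ofFn y).prod * w}

lemma mem_Gc_zero (J : TwoSidedIdeal R) (r : R) : r ∈ Gc J 0 :=
  Submodule.subset_span ⟨fun t => t.elim0, fun t => t.elim0, r, by simp⟩

lemma Gc_mul_left (J : TwoSidedIdeal R) {c : ℕ} {r : R} (x : R) (h : r ∈ Gc J c) :
    x * r ∈ Gc J c := by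
  simpa [smul_eq_mul] using (Gc J c).smul_mem x h

lemma Gc_jmul (J : TwoSidedIdeal R) {c : ℕ} {j r : R} (hj : j ∈ J) (hr : r ∈ Gc J c) :
    j * r ∈ Gc J (c + 1) := by
  have main : ∀ r, r ∈ Gc J c → ∀ j, j ∈ J → j * r ∈ Gc J (c + 1) := by
    intro r hr
    induction hr using Submodule.span_induction with
    | mem z hz =>
      intro j hj
      obtain ⟨y, hy, w, rfl⟩ := hz
      refine Submodule.subset_span ⟨Fin.cons j y, ?_, w, ?_⟩
      · intro t
        refine Fin.cases ?_ ?_ t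
        · simpa using hj
        · intro t'; simpa [Fin.cons_succ] using hy t'
      · rw [List.ofFn_succ]
        simp only [Fin.cons_zero, Fin.cons_succ, List.prod_cons]
        rw [mul_assoc]
    | zero => intro j hj; simp
    | add a b _ _ ha hb =>
      intro j hj
      rw [mul_add]
      exact add_mem (ha j hj) (hb j hj)
    | smul a m _ ih =>
      intro j hj
      rw [smul_eq_mul, ← mul_assoc]
      exact ih (j * a) (J.mul_mem_right j a hj)
  exact main r hr j hj

lemma Gc_bot (J : TwoSidedIdeal R) {k : ℕ}
    (hk : ∀ x : Fin (k + 1) → R, (∀ i, x i ∈ J) → (List.ofFn x).prod = 0) {r : R}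
    (hr : r ∈ Gc J (k + 1)) : r = 0 := by
  have : Gc J (k + 1) ≤ ⊥ := by
    rw [Gc, Submodule.span_le]
    rintro z ⟨y, hy, w, rfl⟩
    rw [SetLike.mem_coe, Submodule.mem_bot, hk y hy, zero_mul]
  simpa using this hr

lemma entry_mem (J : TwoSidedIdeal R) {n : ℕ} :
    ∀ (m : ℕ) (x : Fin m → Matrix (Fin n) (Fin n) R),
      (∀ t, (∀ i j : Fin n, j < i → x t i j = 0) ∧ (∀ i, x t i i ∈ J)) →
      ∀ (i j : Fin n) (c : ℕ), c + (j : ℕ) ≤ m + (i : ℕ) →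
      (List.ofFn x).prod i j ∈ Gc J c := by
  intro m
  induction m with
  | zero =>
    intro x hx i j c hc
    rw [List.ofFn_zero, List.prod_nil]
    by_cases hij : (j : ℕ) = (i : ℕ)
    · have hji : j = i := Fin.ext hij
      subst hji
      have hc0 : c = 0 := by omega
      subst hc0
      exact mem_Gc_zero J _
    · have : i ≠ j := fun h => hij (by rw [h])
      rw [Matrix.one_apply_ne this]
      exact zero_mem _
  | succ m ih =>
    intro x hx i j c hc
    rw [List.ofFn_succ, List.prod_cons, Matrix.mul_apply]
    apply Submodule.sum_mem
    intro k _
    rcases lt_trichotomy (k : ℕ) (i : ℕ) with hk | hk | hk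
    · rw [(hx 0).1 i k (Fin.lt_def.2 hk), zero_mul]
      exact zero_mem _
    · have hki : k = i := Fin.ext hk
      subst hki
      cases c with
      | zero => exact mem_Gc_zero J _
      | succ c =>
        exact Gc_jmul J ((hx 0).2 k)
          (ih (fun t => x t.succ) (fun t => hx _) k j c (by omega))
    · exact Gc_mul_left J _
        (ih (fun t => x t.succ) (fun t => hx _) k j c (by omega))


open UTaux in
/-- If `R` is a semiprimary ring, then the ring of `n × n` upper triangular matrices over
`R` is semiprimary. -/
theorem upperTriangular_isSemiprimary (hR : IsSemiprimary R) (n : ℕ) (hn : 0 < n) :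
    IsSemiprimary (upperTriangular n R) := by
  classical
  obtain ⟨J, hJset, ⟨k, hk⟩, hss⟩ := hR
  have hJmem : ∀ r : R, r ∈ Ideal.jacobson (⊥ : Ideal R) ↔ r ∈ J := by
    intro r
    have := Set.ext_iff.1 hJset r
    simpa using this.symm
  refine ⟨utJ n R, utJ_coe n, ⟨k + (n - 1), ?_⟩, ?_⟩
  · -- nilpotency
    intro x hx
    have hcoe : ((List.ofFn x).prod : Matrix (Fin n) (Fin n) R)
        = (List.ofFn fun t => ((x t : Matrix (Fin n) (Fin n) R))).prod := by
      rw [SubmonoidClass.coe_list_prod, List.map_ofFn]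
      rfl
    have hUT : ∀ i j : Fin n, j < i →
        ((List.ofFn x).prod : Matrix (Fin n) (Fin n) R) i j = 0 :=
      ((List.ofFn x).prod).2
    apply Subtype.ext
    rw [ZeroMemClass.coe_zero]
    ext i j
    rw [Matrix.zero_apply]
    rcases lt_or_ge (j : ℕ) (i : ℕ) with h | h
    · exact hUT i j (Fin.lt_def.2 h)
    · have hj := j.isLt
      have hmem := entry_mem J (k + (n - 1) + 1)
        (fun t => (x t : Matrix (Fin n) (Fin n) R))
        (fun t => ⟨(x t).2, fun i => (hJmem _).1 (mem_utJ.1 (hx t) i)⟩)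
        i j (k + 1) (by omega)
      rw [hcoe]
      exact Gc_bot J hk hmem
  · -- semisimplicity of the quotient
    haveI := hss
    let φ : (upperTriangular n R) →+* (Fin n → J.ringCon.Quotient) :=
      { toFun := fun x i =>
          (((x : Matrix (Fin n) (Fin n) R) i i : R) : J.ringCon.Quotient)
        map_one' := by
          funext i
          show (((1 : upperTriangular n R) : Matrix (Fin n) (Fin n) R) i i :
            J.ringCon.Quotient) = 1
          rw [OneMemClass.coe_one, Matrix.one_apply_eq]
          rfl
        map_mul' := fun x y => by
          funext i
          show (((x * y : upperTriangular n R) : Matrix (Fin n) (Fin n) R) i i :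
            J.ringCon.Quotient) = _
          rw [coe_diagMul x y]
          rfl
        map_zero' := by
          funext i
          show (((0 : upperTriangular n R) : Matrix (Fin n) (Fin n) R) i i :
            J.ringCon.Quotient) = 0
          rw [ZeroMemClass.coe_zero, Matrix.zero_apply]
          rfl
        map_add' := fun x y => by
          funext i
          show (((x + y : upperTriangular n R) : Matrix (Fin n) (Fin n) R) i i :
            J.ringCon.Quotient) = _
          rw [AddMemClass.coe_add, Matrix.add_apply]
          rfl }
    have hsubcoe : ∀ a b : upperTriangular n R,
        ((a - b : upperTriangular n R) : Matrix (Fin n) (Fin n) R)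
          = (a : Matrix (Fin n) (Fin n) R) - (b : Matrix (Fin n) (Fin n) R) := by
      intro a b
      push_cast
      rfl
    have hsound : ∀ a b : upperTriangular n R,
        (utJ n R).ringCon a b → φ a = φ b := by
      intro a b hab
      rw [TwoSidedIdeal.rel_iff] at hab
      funext i
      have hd : (a : Matrix (Fin n) (Fin n) R) i i
          - (b : Matrix (Fin n) (Fin n) R) i i ∈ J := by
        have h1 := mem_utJ.1 hab i
        rw [hsubcoe a b, Matrix.sub_apply] at h1
        exact (hJmem _).1 h1
      exact (RingCon.eq _).2 ((TwoSidedIdeal.rel_iff _ _ _).2 hd)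
    let bar : (utJ n R).ringCon.Quotient →+* (Fin n → J.ringCon.Quotient) :=
      { toFun := fun q => Quotient.liftOn' q φ hsound
        map_one' := by
          show φ 1 = 1
          exact map_one φ
        map_mul' := fun a b => Quotient.inductionOn₂' a b fun x y => by
          show φ (x * y) = φ x * φ y
          exact map_mul φ x y
        map_zero' := by
          show φ 0 = 0
          exact map_zero φ
        map_add' := fun a b => Quotient.inductionOn₂' a b fun x y => by
          show φ (x + y) = φ x + φ y
          exact map_add φ x y }
    have hinj : Function.Injective bar := by
      intro qa qb h
      induction qa using Quotient.inductionOn' with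
      | h a =>
      induction qb using Quotient.inductionOn' with
      | h b =>
      apply Quotient.sound'
      show (utJ n R).ringCon a b
      rw [TwoSidedIdeal.rel_iff, mem_utJ]
      intro i
      have h1 : (((a : Matrix (Fin n) (Fin n) R) i i : R) : J.ringCon.Quotient)
          = (((b : Matrix (Fin n) (Fin n) R) i i : R) : J.ringCon.Quotient) :=
        congrFun h i
      have h2 := (TwoSidedIdeal.rel_iff _ _ _).1 ((RingCon.eq _).1 h1)
      rw [hsubcoe a b, Matrix.sub_apply]
      exact (hJmem _).2 h2
    have hsurj : Function.Surjective bar := by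
      intro q
      have hrep : ∀ i, ∃ r : R, (r : J.ringCon.Quotient) = q i := by
        intro i
        exact ⟨Quotient.out (q i), Quotient.out_eq' (q i)⟩
      choose g hg using hrep
      have hdg : Matrix.diagonal g ∈ upperTriangular n R :=
        fun i j h => Matrix.diagonal_apply_ne _ h.ne'
      refine ⟨Quotient.mk'' (⟨Matrix.diagonal g, hdg⟩ : upperTriangular n R), ?_⟩
      funext i
      show ((Matrix.diagonal g i i : R) : J.ringCon.Quotient) = q i
      rw [Matrix.diagonal_apply_eq]
      exact hg i
    have e : (utJ n R).ringCon.Quotient ≃+* (Fin n → J.ringCon.Quotient) :=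
      RingEquiv.ofBijective bar ⟨hinj, hsurj⟩
    exact e.symm.isSemisimpleRing
end

section
/- Let R be a semiprimary ring and H a heredity ideal of R. Then H is projective both as a right R-module and as a left R-module. (In particular, the smallest nonzero term H_{m−1} of any heredity chain of a quasi-hereditary ring R is projective on both sides.) -/
/-! Basic definitions: semiprimary rings, heredity ideals, quasi-hereditary rings. -/

variable {R : Type*} [Ring R]

section HeredityAux


section CornerRing

variable {A : Type*} [Ring A]

/-- The corner "ring" `eAe` of a bundled idempotent, as a subtype. -/
def CornerT (e : {x : A // IsIdempotentElem x}) : Type _ :=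
  {x : A // (e : A) * x = x ∧ x * (e : A) = x}

namespace CornerT

variable {e : {x : A // IsIdempotentElem x}}

instance : Zero (CornerT e) := ⟨⟨0, by simp, by simp⟩⟩
instance : Add (CornerT e) :=
  ⟨fun x y => ⟨x.1 + y.1, by rw [mul_add, x.2.1, y.2.1], by rw [add_mul, x.2.2, y.2.2]⟩⟩
instance : Neg (CornerT e) :=
  ⟨fun x => ⟨-x.1, by rw [mul_neg, x.2.1], by rw [neg_mul, x.2.2]⟩⟩
instance : Sub (CornerT e) :=
  ⟨fun x y => ⟨x.1 - y.1, by rw [mul_sub, x.2.1, y.2.1], by rw [sub_mul, x.2.2, y.2.2]⟩⟩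
instance : SMul ℕ (CornerT e) :=
  ⟨fun n x => ⟨n • x.1, by rw [mul_smul_comm, x.2.1], by rw [smul_mul_assoc, x.2.2]⟩⟩
instance : SMul ℤ (CornerT e) :=
  ⟨fun n x => ⟨n • x.1, by rw [mul_smul_comm, x.2.1], by rw [smul_mul_assoc, x.2.2]⟩⟩
instance : Mul (CornerT e) :=
  ⟨fun x y => ⟨x.1 * y.1, by rw [← mul_assoc, x.2.1], by rw [mul_assoc, y.2.2]⟩⟩
instance : One (CornerT e) := ⟨⟨e.1, e.2, e.2⟩⟩

lemma val_injective : Function.Injective (Subtype.val : CornerT e → A) :=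
  Subtype.val_injective

/-- Constructor keeping the `CornerT` head symbol. -/
def of (x : A) (h1 : (e : A) * x = x) (h2 : x * (e : A) = x) : CornerT e := ⟨x, h1, h2⟩

@[simp] lemma val_of (x : A) (h1 : (e : A) * x = x) (h2 : x * (e : A) = x) :
    (of x h1 h2).1 = x := rfl

instance : AddCommGroup (CornerT e) :=
  Function.Injective.addCommGroup Subtype.val val_injective rfl (fun _ _ => rfl)
    (fun _ => rfl) (fun _ _ => rfl) (fun _ _ => rfl) (fun _ _ => rfl)

instance : Ring (CornerT e) :=
  { (inferInstance : AddCommGroup (CornerT e)) with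
    mul := (· * ·)
    left_distrib := fun a b c => Subtype.ext (mul_add a.1 b.1 c.1)
    right_distrib := fun a b c => Subtype.ext (add_mul a.1 b.1 c.1)
    zero_mul := fun a => Subtype.ext (zero_mul a.1)
    mul_zero := fun a => Subtype.ext (mul_zero a.1)
    mul_assoc := fun a b c => Subtype.ext (mul_assoc a.1 b.1 c.1)
    one := 1
    one_mul := fun a => Subtype.ext a.2.1
    mul_one := fun a => Subtype.ext a.2.2 }

@[simp] lemma val_mul (x y : CornerT e) : (x * y).1 = x.1 * y.1 := rfl
@[simp] lemma val_add (x y : CornerT e) : (x + y).1 = x.1 + y.1 := rfl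
@[simp] lemma val_zero : ((0 : CornerT e)).1 = 0 := rfl
@[simp] lemma val_one : ((1 : CornerT e)).1 = e.1 := rfl

end CornerT

/-- `eA` as a left module over the corner ring. -/
def CornerMod (e : {x : A // IsIdempotentElem x}) : Type _ := {x : A // (e : A) * x = x}

namespace CornerMod

variable {e : {x : A // IsIdempotentElem x}}

instance : Zero (CornerMod e) := ⟨⟨0, by simp⟩⟩
instance : Add (CornerMod e) := ⟨fun x y => ⟨x.1 + y.1, by rw [mul_add, x.2, y.2]⟩⟩
instance : Neg (CornerMod e) := ⟨fun x => ⟨-x.1, by rw [mul_neg, x.2]⟩⟩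
instance : Sub (CornerMod e) := ⟨fun x y => ⟨x.1 - y.1, by rw [mul_sub, x.2, y.2]⟩⟩
instance : SMul ℕ (CornerMod e) := ⟨fun n x => ⟨n • x.1, by rw [mul_smul_comm, x.2]⟩⟩
instance : SMul ℤ (CornerMod e) := ⟨fun n x => ⟨n • x.1, by rw [mul_smul_comm, x.2]⟩⟩

lemma val_injective : Function.Injective (Subtype.val : CornerMod e → A) :=
  Subtype.val_injective

instance : AddCommGroup (CornerMod e) :=
  Function.Injective.addCommGroup Subtype.val val_injective rfl (fun _ _ => rfl)
    (fun _ => rfl) (fun _ _ => rfl) (fun _ _ => rfl) (fun _ _ => rfl)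

instance : SMul (CornerT e) (CornerMod e) :=
  ⟨fun c x => ⟨c.1 * x.1, by rw [← mul_assoc, c.2.1]⟩⟩

@[simp] lemma val_smul (c : CornerT e) (x : CornerMod e) : (c • x).1 = c.1 * x.1 := rfl
@[simp] lemma val_add (x y : CornerMod e) : (x + y).1 = x.1 + y.1 := rfl
@[simp] lemma val_zero : ((0 : CornerMod e)).1 = 0 := rfl

instance : MulAction (CornerT e) (CornerMod e) where
  one_smul x := Subtype.ext x.2
  mul_smul c d x := Subtype.ext (mul_assoc c.1 d.1 x.1)

instance : DistribMulAction (CornerT e) (CornerMod e) where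
  smul_zero c := Subtype.ext (mul_zero c.1)
  smul_add c x y := Subtype.ext (mul_add c.1 x.1 y.1)

instance : Module (CornerT e) (CornerMod e) where
  add_smul c d x := Subtype.ext (add_mul c.1 d.1 x.1)
  zero_smul x := Subtype.ext (zero_mul x.1)

/-- The valuation as an additive monoid hom. -/
def valHom : CornerMod e →+ A := AddMonoidHom.mk' Subtype.val (fun _ _ => rfl)

@[simp] lemma valHom_apply (x : CornerMod e) : valHom x = x.1 := rfl

end CornerMod

end CornerRing

section ProjSS

/-- Every module over a semisimple ring is projective. -/
theorem projective_of_isSemisimpleRing {C : Type*} [Ring C] [IsSemisimpleRing C]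
    (M : Type*) [AddCommGroup M] [Module C M] : Module.Projective C M := by
  set t := Finsupp.linearCombination C (id : M → M) with ht
  obtain ⟨K', hK'⟩ := exists_isCompl (LinearMap.ker t)
  have hproj : Module.Projective C K' :=
    Module.Projective.of_split K'.subtype
      (Submodule.linearProjOfIsCompl K' (LinearMap.ker t) hK'.symm)
      (LinearMap.ext fun x => Submodule.linearProjOfIsCompl_apply_left hK'.symm x)
  have hbij : Function.Bijective (t.comp K'.subtype) := by
    constructor
    · intro x y hxy
      have h1 : (x : M →₀ C) - y ∈ LinearMap.ker t := by
        simp only [LinearMap.mem_ker, map_sub]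
        simpa [sub_eq_zero] using hxy
      have h2 : (x : M →₀ C) - y ∈ K' := sub_mem x.2 y.2
      have h0 := Submodule.disjoint_def.mp hK'.disjoint _ h1 h2
      exact Subtype.ext (by simpa [sub_eq_zero] using h0)
    · intro m
      obtain ⟨c, hc⟩ : ∃ c, t c = m := ⟨Finsupp.single m 1, by simp [ht]⟩
      have : c ∈ LinearMap.ker t ⊔ K' := by rw [hK'.sup_eq_top]; trivial
      obtain ⟨u, hu, v, hv, huv⟩ := Submodule.mem_sup.mp this
      exact ⟨⟨v, hv⟩, by
        have : t v = m := by
          have := hc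
          rw [← huv, map_add] at this
          simpa [LinearMap.mem_ker.mp hu] using this
        simpa using this⟩
  exact Module.Projective.of_equiv (LinearEquiv.ofBijective (t.comp K'.subtype) hbij)

end ProjSS


section Transfer

/-- If `B` embeds (additively and multiplicatively) into a semisimple ring `S` with image
the corner `ε S ε` where `ε` is the image of `1`, then `B` is semisimple. -/
theorem isSemisimpleRing_of_corner_embedding {B S : Type*} [Ring B] [Ring S]
    [IsSemisimpleRing S] (f : B → S)
    (hadd : ∀ x y, f (x + y) = f x + f y) (hmul : ∀ x y, f (x * y) = f x * f y)
    (hinj : Function.Injective f)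
    (hrange : ∀ s : S, f 1 * s * f 1 ∈ Set.range f) : IsSemisimpleRing B := by
  set F : B →+ S := AddMonoidHom.mk' f hadd with hF
  have hFf : ∀ b, F b = f b := fun _ => rfl
  set ε := f 1 with hε
  have hεl : ∀ b, ε * f b = f b := fun b => by rw [hε, ← hmul, one_mul]
  have hεr : ∀ b, f b * ε = f b := fun b => by rw [hε, ← hmul, mul_one]
  refine { exists_isCompl := fun L => ?_ }
  set SL := Submodule.span S (f '' (L : Set B)) with hSL
  obtain ⟨W, hW⟩ := exists_isCompl SL
  set q := Submodule.linearProjOfIsCompl SL W hW with hq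
  have claim : ∀ x ∈ SL, ∃ l, l ∈ L ∧ f l = ε * x := by
    intro x hx
    obtain ⟨n, c, g, hsum⟩ := Submodule.mem_span_set'.mp hx
    have hterm : ∀ i : Fin n, ∃ t, t ∈ L ∧ f t = ε * (c i • (g i : S)) := by
      intro i
      obtain ⟨li, hliL, hfl⟩ := (g i).2
      obtain ⟨bi, hbi⟩ := hrange (c i)
      refine ⟨bi * li, L.smul_mem bi hliL, ?_⟩
      rw [hmul, hbi, ← hfl, smul_eq_mul]
      rw [show f 1 * c i * f 1 * f li = f 1 * c i * (f 1 * f li) from mul_assoc _ _ _]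
      rw [← hε, hεl, hε, mul_assoc]
    choose t htL hft using hterm
    refine ⟨∑ i, t i, Submodule.sum_mem L fun i _ => htL i, ?_⟩
    rw [← hFf, map_sum]
    simp only [hFf, hft]
    rw [← Finset.mul_sum, hsum]
  have key : ∀ b : B, ∃ l, l ∈ L ∧ f l = ε * ((q (F b)) : S) := fun b => claim _ (q (F b)).2
  choose l hlL hfl using key
  have hP : ∀ b c : B, l (b + c) = l b + l c := by
    intro b c
    apply hinj
    rw [hadd, hfl, hfl, hfl, map_add, map_add]
    push_cast
    rw [mul_add]
  have hPs : ∀ c b : B, l (c * b) = c * l b := by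
    intro c b
    apply hinj
    rw [hmul, hfl, hfl]
    have h1 : F (c * b) = f c • F b := by rw [hFf, hFf, hmul, smul_eq_mul]
    rw [h1, map_smul]
    have h2 : ((f c • q (F b) : SL) : S) = f c * ((q (F b)) : S) := rfl
    rw [h2, ← mul_assoc, ← mul_assoc, hεl, hεr]
  set P : B →ₗ[B] ↥L :=
    { toFun := fun b => ⟨l b, hlL b⟩
      map_add' := fun b c => Subtype.ext (hP b c)
      map_smul' := fun c b => Subtype.ext (hPs c b) } with hPdef
  have hfix : ∀ x : ↥L, P (x : B) = x := by
    intro x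
    apply Subtype.ext
    show l (x : B) = (x : B)
    apply hinj
    rw [hfl]
    have hmem : F (x : B) ∈ SL := Submodule.subset_span ⟨(x : B), x.2, rfl⟩
    have : q (F (x : B)) = ⟨F (x : B), hmem⟩ :=
      Submodule.linearProjOfIsCompl_apply_left hW ⟨F (x : B), hmem⟩
    rw [this]
    exact hεl _
  exact ⟨LinearMap.ker P, LinearMap.isCompl_of_proj hfix⟩

end Transfer

end HeredityAux
section Generator

variable {R : Type*} [Ring R]

lemma TwoSidedIdeal.mk'_eq_zero_iff (I : TwoSidedIdeal R) (x : R) :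
    I.ringCon.mk' x = 0 ↔ x ∈ I := by
  have h0 : (0 : I.ringCon.Quotient) = I.ringCon.mk' 0 := (map_zero _).symm
  rw [h0]
  show (x : I.ringCon.Quotient) = (0 : R) ↔ _
  rw [RingCon.eq]
  exact Iff.rfl

lemma TwoSidedIdeal.mk'_surjective (I : TwoSidedIdeal R) :
    Function.Surjective I.ringCon.mk' := by
  intro y
  exact Quotient.inductionOn' y fun a => ⟨a, rfl⟩

theorem exists_idempotent_generator (hR : IsSemiprimary R) (H : TwoSidedIdeal R)
    (hidem : H.IsIdem)
    (hJH : ∀ a ∈ H, ∀ j ∈ Ideal.jacobson (⊥ : Ideal R), ∀ b ∈ H, a * j * b = 0) :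
    ∃ e : {x : R // IsIdempotentElem x}, e.1 ∈ H ∧
      (∀ h ∈ H, h ∈ TwoSidedIdeal.span {e.1}) ∧ IsSemisimpleRing (CornerT e) := by
  obtain ⟨Jt, hJset, ⟨k, hk⟩, hss⟩ := hR
  set S := Jt.ringCon.Quotient with hS
  set π : R →+* S := Jt.ringCon.mk' with hπ
  have hπsurj : Function.Surjective π := Jt.mk'_surjective
  have hker : ∀ x : R, π x = 0 ↔ x ∈ Jt := fun x => Jt.mk'_eq_zero_iff x
  have hnilp : ∀ x ∈ Jt, x ^ (k + 1) = 0 := by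
    intro x hx
    have := hk (fun _ => x) (fun _ => hx)
    simpa [List.ofFn_const, pow_succ'] using this
  haveI : IsSemisimpleRing S := hss
  -- the image of H in S
  set L : Submodule S S :=
    { carrier := π '' (H : Set R)
      add_mem' := by rintro a b ⟨x, hx, rfl⟩ ⟨y, hy, rfl⟩
                     exact ⟨x + y, H.add_mem hx hy, map_add π x y⟩
      zero_mem' := ⟨0, H.zero_mem, map_zero π⟩
      smul_mem' := by rintro s a ⟨x, hx, rfl⟩
                      obtain ⟨r, rfl⟩ := hπsurj s
                      exact ⟨r * x, H.mul_mem_left r x hx, map_mul π r x⟩ } with hL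
  obtain ⟨L', hcompl⟩ := exists_isCompl L
  have h1 : (1 : S) ∈ L ⊔ L' := by rw [hcompl.sup_eq_top]; trivial
  obtain ⟨ε, hεL, c, hcL', hεc⟩ := Submodule.mem_sup.mp h1
  have hrunit : ∀ x ∈ L, x * ε = x := by
    intro x hx
    have h2 : x - x * ε = x * c := by
      rw [eq_comm, eq_sub_iff_add_eq]
      rw [← mul_add, add_comm c ε, hεc, mul_one]
    have hxε : x * ε ∈ L := L.smul_mem x hεL
    have hxc : x * c ∈ L' := L'.smul_mem x hcL'
    have hmem : x - x * ε ∈ L := sub_mem hx hxε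
    have h0 : x - x * ε = 0 :=
      Submodule.disjoint_def.mp hcompl.disjoint _ hmem (h2 ▸ hxc)
    rw [sub_eq_zero] at h0; exact h0.symm
  have hεidem : IsIdempotentElem ε := hrunit ε hεL
  -- lift the idempotent
  have hkerNil : ∀ x ∈ RingHom.ker π, IsNilpotent x := fun x hx =>
    ⟨k + 1, hnilp x ((hker x).mp hx)⟩
  obtain ⟨e, he, hπe⟩ :=
    exists_isIdempotentElem_eq_of_ker_isNilpotent π hkerNil ε (hπsurj ε) hεidem
  -- e ∈ H
  obtain ⟨h₀, hh₀H, hπh₀⟩ := hεL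
  have heH : e ∈ H := by
    set ψ := H.ringCon.mk' with hψ
    have hj : e - h₀ ∈ Jt := (hker _).mp (by rw [map_sub, hπe, hπh₀, sub_self])
    have h2 : ψ e = ψ (e - h₀) := by
      rw [map_sub, (H.mk'_eq_zero_iff h₀).mpr hh₀H, sub_zero]
    have h3 : ψ e = 0 := by
      have hpow : e ^ (k + 1) = e := he.pow_succ_eq k
      calc ψ e = ψ (e ^ (k + 1)) := by rw [hpow]
        _ = (ψ e) ^ (k + 1) := by rw [map_pow]
        _ = (ψ (e - h₀)) ^ (k + 1) := by rw [h2]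
        _ = ψ ((e - h₀) ^ (k + 1)) := by rw [map_pow]
        _ = 0 := by rw [hnilp _ hj, map_zero]
    exact (H.mk'_eq_zero_iff e).mp h3
  -- every element of H is in the two-sided ideal generated by e
  have hspan : ∀ h ∈ H, h ∈ TwoSidedIdeal.span {e} := by
    set E := TwoSidedIdeal.span {e} with hE
    set φ := E.ringCon.mk' with hφ
    have hφe : φ e = 0 := (E.mk'_eq_zero_iff e).mpr (TwoSidedIdeal.subset_span rfl)
    have hestep : ∀ h ∈ H, ∃ j ∈ Jt, φ h = φ j := by
      intro h hh
      refine ⟨h - h * e, ?_, ?_⟩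
      · refine (hker _).mp ?_
        rw [map_sub, map_mul, hπe]
        rw [hrunit (π h) ⟨h, hh, rfl⟩, sub_self]
      · have : φ (h * e) = 0 := by rw [map_mul, hφe, mul_zero]
        rw [map_sub, this, sub_zero]
    set P : ℕ → Set R :=
      fun m => {y | ∃ x : Fin m → R, (∀ i, x i ∈ H) ∧ y = (List.ofFn x).prod} with hP
    have claim1 : ∀ y ∈ P (k + 1), φ y = 0 := by
      rintro y ⟨x, hxH, rfl⟩
      choose j hj1 hj2 using fun i => hestep (x i) (hxH i)
      have e1 : φ (List.ofFn x).prod = (List.ofFn (fun i => φ (x i))).prod := by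
        rw [map_list_prod, List.map_ofFn]; rfl
      have e2 : (List.ofFn (fun i => φ (x i))) = (List.ofFn (fun i => φ (j i))) := by
        congr 1; funext i; exact hj2 i
      have e3 : (List.ofFn (fun i => φ (j i))).prod = φ (List.ofFn j).prod := by
        rw [map_list_prod, List.map_ofFn]; rfl
      rw [e1, e2, e3, hk j hj1, map_zero]
    have hstep2 : ∀ h ∈ H,
        h ∈ AddSubgroup.closure {y | ∃ a ∈ H, ∃ b ∈ H, y = a * b} := by
      intro h hh
      have hmem : h ∈ TwoSidedIdeal.span {y : R | ∃ a ∈ H, ∃ b ∈ H, y = a * b} := by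
        rw [hidem]; exact hh
      have h2 := TwoSidedIdeal.mem_span_iff_mem_addSubgroup_closure.mp hmem
      refine AddSubgroup.closure_mono ?_ h2
      rintro y ⟨w, ⟨u, -, z, ⟨p, hp, q, hq, rfl⟩, rfl⟩, v, -, rfl⟩
      exact ⟨u * p, H.mul_mem_left u p hp, q * v, H.mul_mem_right q v hq, by
        rw [← mul_assoc]; rw [mul_assoc u p q]⟩
    have all : ∀ m, ∀ h ∈ H, h ∈ AddSubgroup.closure (P (m + 1)) := by
      intro m
      induction m with
      | zero =>
        intro h hh
        refine AddSubgroup.subset_closure ⟨fun _ => h, fun _ => hh, ?_⟩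
        simp
      | succ n IH =>
        intro h hh
        have h1 := IH h hh
        have hPsub : P (n + 1) ⊆ (AddSubgroup.closure (P (n + 2)) : Set R) := by
          rintro y ⟨x, hxH, rfl⟩
          have hres : (List.ofFn x).prod
              = x 0 * (List.ofFn (fun i : Fin n => x i.succ)).prod := by
            rw [List.ofFn_succ, List.prod_cons]
          set rest := (List.ofFn (fun i : Fin n => x i.succ)).prod with hrest
          rw [hres]
          have h2 := hstep2 (x 0) (hxH 0)
          refine AddSubgroup.closure_induction ?_ ?_ ?_ ?_ h2
          · rintro t ⟨p, hp, q, hq, rfl⟩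
            refine AddSubgroup.subset_closure
              ⟨Fin.cons p (Fin.cons q (fun i => x i.succ)), ?_, ?_⟩
            · intro i
              refine Fin.cases ?_ (fun i' => ?_) i
              · simpa using hp
              · refine Fin.cases ?_ (fun i'' => ?_) i'
                · simpa using hq
                · simpa using hxH _
            · rw [List.ofFn_succ, List.prod_cons, List.ofFn_succ, List.prod_cons]
              simp only [Fin.cons_zero, Fin.cons_succ]
              rw [← hrest, mul_assoc]
          · rw [zero_mul]; exact zero_mem _
          · intro a b _ _ ha hb
            rw [add_mul]; exact add_mem ha hb
          · intro a _ ha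
            rw [neg_mul]; exact neg_mem ha
        exact AddSubgroup.closure_induction
          (fun t ht => hPsub ht) (zero_mem _) (fun a b _ _ => add_mem) (fun a _ => neg_mem) h1
    intro h hh
    have h3 := all k h hh
    refine AddSubgroup.closure_induction ?_ E.zero_mem (fun a b _ _ => E.add_mem)
      (fun a _ ha => ?_) h3
    · intro t ht
      exact (E.mk'_eq_zero_iff t).mp (claim1 t ht)
    · exact E.neg_mem ha
  -- the corner ring is semisimple
  refine ⟨⟨e, he⟩, heH, hspan, ?_⟩
  refine isSemisimpleRing_of_corner_embedding (S := S) (fun x => π x.1)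
    (fun x y => map_add π _ _) (fun x y => map_mul π _ _) ?_ ?_
  · intro x y hxy
    have hxy' : π x.1 = π y.1 := hxy
    have hd : x.1 - y.1 ∈ Jt := (hker _).mp (by rw [map_sub, hxy', sub_self])
    have hdJ : x.1 - y.1 ∈ Ideal.jacobson (⊥ : Ideal R) := by
      have := hJset ▸ (show x.1 - y.1 ∈ (Jt : Set R) from hd)
      exact this
    have h0 : e * (x.1 - y.1) * e = 0 := hJH e heH _ hdJ e heH
    have hfix : e * (x.1 - y.1) * e = x.1 - y.1 := by
      rw [mul_sub, x.2.1, y.2.1, sub_mul, x.2.2, y.2.2]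
    apply Subtype.ext
    rw [← sub_eq_zero, ← hfix, h0]
  · intro s
    obtain ⟨r, rfl⟩ := hπsurj s
    refine ⟨⟨e * r * e, ?_, ?_⟩, ?_⟩
    · show (⟨e, he⟩ : {x : R // IsIdempotentElem x}).1 * (e * r * e) = e * r * e
      rw [← mul_assoc, ← mul_assoc, he.eq]
    · show (e * r * e) * (⟨e, he⟩ : {x : R // IsIdempotentElem x}).1 = e * r * e
      rw [mul_assoc, he.eq]
    · show π (e * r * e) = π e * π r * π e
      rw [map_mul, map_mul]

end Generator

open Pointwise in
/-- A heredity ideal of a semiprimary ring is projective both as a right `R`-module and as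
a left `R`-module. -/
theorem heredityIdeal_projective (hR : IsSemiprimary R) (H : TwoSidedIdeal R)
    (hH : IsHeredityIdeal H) :
    Module.Projective Rᵐᵒᵖ H ∧ Module.Projective R H := by
  obtain ⟨hidem, hproj, hJH⟩ := hH
  refine ⟨hproj, ?_⟩
  obtain ⟨e, heH, hspan, hcss⟩ := exists_idempotent_generator hR H hidem hJH
  haveI : IsSemisimpleRing (CornerT e) := hcss
  haveI hMproj : Module.Projective (CornerT e) (CornerMod e) :=
    projective_of_isSemisimpleRing (CornerMod e)
  obtain ⟨s, hs⟩ := Module.projective_def.mp hMproj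
  set M := CornerMod e with hM
  set eM : M := ⟨e.1, e.2.eq⟩ with heM
  set vv : M → (M →₀ R) := fun x => Finsupp.mapRange (fun c : CornerT e => (c.1 : R)) rfl (s x) with hvv
  have vv_add : ∀ x y : M, vv (x + y) = vv x + vv y := by
    intro x y
    ext i
    simp [hvv, Finsupp.mapRange_apply, map_add]
  have vv_zero : vv 0 = 0 := by
    ext i
    simp [hvv, Finsupp.mapRange_apply]
  have vv_smul : ∀ (c : CornerT e) (x : M), vv (c • x) = c.1 • vv x := by
    intro c x
    ext i
    simp only [hvv, Finsupp.mapRange_apply, map_smul, Finsupp.smul_apply]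
    rfl
  set vvHom : M →+ (M →₀ R) := AddMonoidHom.mk' vv vv_add with hvvHom
  have vvHom_apply : ∀ x : M, vvHom x = vv x := fun _ => rfl
  set Φ : (M →₀ R) →ₗ[R] R := Finsupp.linearCombination R (fun i : M => i.1) with hΦ
  have Φvv : ∀ x : M, Φ (vv x) = x.1 := by
    intro x
    have h1 : Φ (vv x) = (s x).sum fun i c => c.1 • i.1 := by
      rw [hΦ, hvv, Finsupp.linearCombination_apply]
      exact Finsupp.sum_mapRange_index (fun i => zero_smul R _)
    have h2 : x.1 = (s x).sum fun i c => (c • i).1 := by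
      conv_lhs => rw [← hs x]
      rw [Finsupp.linearCombination_apply]
      exact map_finsuppSum CornerMod.valHom (s x) _
    rw [h1, h2]
    rfl
  set mulR : M → R → M := fun j r => ⟨j.1 * r, by rw [← mul_assoc, j.2]⟩ with hmulR
  set mulRHom : R → M →+ M :=
    fun r => AddMonoidHom.mk' (fun j => mulR j r)
      (fun a b => Subtype.ext (add_mul a.1 b.1 r)) with hmulRHom
  set ρ : R → (M →₀ R) →ₗ[R] (M →₀ R) :=
    fun r => Finsupp.lsum ℕ (fun j => LinearMap.toSpanSingleton R (M →₀ R) (vv (mulR j r)))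
    with hρ
  have ρ_single : ∀ (r : R) (j : M) (a : R),
      ρ r (Finsupp.single j a) = a • vv (mulR j r) := by
    intro r j a
    rw [hρ, Finsupp.lsum_single]
    rfl
  have ρ_vv : ∀ (r : R) (x : M), ρ r (vv x) = vv (mulR x r) := by
    intro r x
    have step1 : ρ r (vv x) = (s x).sum fun j c => c.1 • vv (mulR j r) := by
      rw [hρ, Finsupp.lsum_apply, hvv]
      refine Finsupp.sum_mapRange_index (fun j => ?_)
      simp
    have step2 : (s x).sum (fun j c => c.1 • vv (mulR j r))
        = (s x).sum (fun j c => vvHom (mulRHom r (c • j))) := by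
      refine Finsupp.sum_congr (fun j _ => ?_)
      rw [vvHom_apply]
      show _ • vv (mulR j r) = vv (mulR (_ • j) r)
      rw [← vv_smul]
      congr 1
      apply Subtype.ext
      exact (mul_assoc _ _ _).symm
    have step3 : (s x).sum (fun j c => vvHom (mulRHom r (c • j)))
        = vvHom (mulRHom r ((s x).sum fun j c => c • j)) := by
      exact (map_finsuppSum (vvHom.comp (mulRHom r)) (s x) (fun j c => c • j)).symm
    have step4 : (s x).sum (fun j c => c • j) = x := by
      conv_rhs => rw [← hs x]
      rw [Finsupp.linearCombination_apply]
      rfl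
    rw [step1, step2, step3, step4]
    rfl
  have ρ_add : ∀ r r' : R, ρ (r + r') = ρ r + ρ r' := by
    intro r r'
    refine Finsupp.lhom_ext fun j a => ?_
    have h1 := ρ_single (r + r') j a
    have h2 := ρ_single r j a
    have h3 := ρ_single r' j a
    rw [LinearMap.add_apply, h1, h2, h3]
    have : mulR j (r + r') = mulR j r + mulR j r' := Subtype.ext (mul_add j.1 r r')
    rw [this, vv_add, smul_add]
  -- I2 : Φ intertwines ρ with right multiplication
  have ΦI2 : ∀ (r : R) (c : M →₀ R), Φ (ρ r c) = Φ c * r := by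
    intro r
    have hmaps : Φ ∘ₗ ρ r = (LinearMap.toSpanSingleton R R r) ∘ₗ Φ := by
      refine Finsupp.lhom_ext fun j a => ?_
      simp only [LinearMap.comp_apply]
      rw [ρ_single, map_smul, Φvv]
      rw [hΦ, Finsupp.linearCombination_single, LinearMap.toSpanSingleton_apply]
      show a • (j.1 * r) = (a • j.1) • r
      rw [smul_eq_mul, smul_eq_mul, smul_eq_mul, mul_assoc]
    intro c
    exact DFunLike.congr_fun hmaps c
  -- I3 : ρ e acts through Φ
  have ΦI3 : ∀ c : M →₀ R, ρ e.1 c = (Φ c * e.1) • vv eM := by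
    have hmaps : ρ e.1 = (LinearMap.toSpanSingleton R (M →₀ R) (vv eM)) ∘ₗ
        (LinearMap.toSpanSingleton R R e.1) ∘ₗ Φ := by
      refine Finsupp.lhom_ext fun j a => ?_
      simp only [LinearMap.comp_apply]
      rw [ρ_single, hΦ, Finsupp.linearCombination_single,
        LinearMap.toSpanSingleton_apply, LinearMap.toSpanSingleton_apply]
      have hc : vv (mulR j e.1) = (j.1 * e.1) • vv eM := by
        have p1 : e.1 * (j.1 * e.1) = j.1 * e.1 := by rw [← mul_assoc, j.2]
        have p2 : (j.1 * e.1) * e.1 = j.1 * e.1 := by rw [mul_assoc, e.2.eq]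
        have hcj : mulR j e.1 = CornerT.of (j.1 * e.1) p1 p2 • eM := by
          apply Subtype.ext
          show j.1 * e.1 = (j.1 * e.1) * e.1
          rw [mul_assoc, e.2.eq]
        rw [hcj, vv_smul, CornerT.val_of]
      rw [hc, smul_smul, smul_eq_mul, smul_eq_mul, mul_assoc]
    intro c
    rw [hmaps]
    simp only [LinearMap.comp_apply, LinearMap.toSpanSingleton_apply, smul_smul]
    rw [smul_eq_mul]
  -- the submodule W
  set W : Submodule R (M →₀ R) := Submodule.span R (Set.range vv) with hW
  have hvvW : ∀ x : M, vv x ∈ W := fun x => Submodule.subset_span ⟨x, rfl⟩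
  have ρ_stab : ∀ (r : R), ∀ w ∈ W, ρ r w ∈ W := by
    intro r w hw
    refine Submodule.span_induction ?_ ?_ ?_ ?_ hw
    · rintro y ⟨x, rfl⟩
      rw [ρ_vv]
      exact hvvW _
    · rw [map_zero]; exact W.zero_mem
    · intro u v _ _ hu hv
      rw [map_add]; exact W.add_mem hu hv
    · intro a u _ hu
      rw [map_smul]; exact W.smul_mem a hu
  have ρ_comp : ∀ (r r' : R), ∀ w ∈ W, ρ r' (ρ r w) = ρ (r * r') w := by
    intro r r' w hw
    refine Submodule.span_induction ?_ ?_ ?_ ?_ hw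
    · rintro y ⟨x, rfl⟩
      rw [ρ_vv, ρ_vv, ρ_vv]
      congr 1
      exact Subtype.ext (mul_assoc x.1 r r')
    · rw [map_zero, map_zero, map_zero]
    · intro u v _ _ hu hv
      rw [map_add (ρ r), map_add (ρ r'), map_add (ρ (r * r')), hu, hv]
    · intro a u _ hu
      rw [map_smul (ρ r), map_smul (ρ r'), map_smul (ρ (r * r')), hu]
  have ρ_one : ∀ w ∈ W, ρ 1 w = w := by
    intro w hw
    refine Submodule.span_induction ?_ ?_ ?_ ?_ hw
    · rintro y ⟨x, rfl⟩
      rw [ρ_vv]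
      have : mulR x 1 = x := Subtype.ext (mul_one x.1)
      rw [this]
    · rw [map_zero]
    · intro u v _ _ hu hv; rw [map_add, hu, hv]
    · intro a u _ hu; rw [map_smul, hu]
  have ρ_zero : ∀ w ∈ W, ρ 0 w = 0 := by
    intro w hw
    refine Submodule.span_induction ?_ ?_ ?_ ?_ hw
    · rintro y ⟨x, rfl⟩
      rw [ρ_vv]
      have : mulR x 0 = 0 := Subtype.ext (mul_zero x.1)
      rw [this, vv_zero]
    · rw [map_zero]
    · intro u v _ _ hu hv; rw [map_add, hu, hv, add_zero]
    · intro a u _ hu; rw [map_smul, hu, smul_zero]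
  have hΦW : ∀ c ∈ W, Φ c ∈ H := by
    intro c hc
    refine Submodule.span_induction ?_ ?_ ?_ ?_ hc
    · rintro y ⟨x, rfl⟩
      rw [Φvv]
      have : x.1 = e.1 * x.1 := x.2.symm
      rw [this]
      exact H.mul_mem_right e.1 x.1 heH
    · rw [map_zero]; exact H.zero_mem
    · intro u v _ _ hu hv; rw [map_add]; exact H.add_mem hu hv
    · intro a u _ hu; rw [map_smul]; exact H.mul_mem_left a _ hu
  -- the right module structure on W
  letI instModW : Module Rᵐᵒᵖ ↥W :=
    { smul := fun m w => ⟨ρ m.unop w.1, ρ_stab m.unop w.1 w.2⟩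
      one_smul := fun w => Subtype.ext (ρ_one w.1 w.2)
      mul_smul := fun m n w => Subtype.ext (ρ_comp n.unop m.unop w.1 w.2).symm
      smul_add := fun m u v => Subtype.ext (map_add (ρ m.unop) u.1 v.1)
      add_smul := fun m n w => Subtype.ext (by
        show ρ (m.unop + n.unop) w.1 = ρ m.unop w.1 + ρ n.unop w.1
        rw [ρ_add m.unop n.unop, LinearMap.add_apply])
      zero_smul := fun w => Subtype.ext (ρ_zero w.1 w.2)
      smul_zero := fun m => Subtype.ext (map_zero (ρ m.unop)) }
  have smulW_val : ∀ (m : Rᵐᵒᵖ) (w : ↥W), ((m • w : ↥W) : M →₀ R) = ρ m.unop w.1 :=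
    fun m w => rfl
  -- ΦH as an Rᵐᵒᵖ-linear map
  set ΦH : ↥W →ₗ[Rᵐᵒᵖ] ↥H :=
    { toFun := fun w => ⟨Φ w.1, hΦW w.1 w.2⟩
      map_add' := fun u v => Subtype.ext (by
        show Φ (u.1 + v.1) = Φ u.1 + Φ v.1
        rw [map_add])
      map_smul' := fun m w => Subtype.ext (by
        show Φ (ρ m.unop w.1) = _
        rw [ΦI2]
        rfl) } with hΦH
  have ΦH_val : ∀ w : ↥W, (ΦH w : R) = Φ w.1 := fun _ => rfl
  -- surjectivity of ΦH
  have hsurj : Function.Surjective ΦH := by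
    intro h
    have ht := TwoSidedIdeal.mem_span_iff_mem_addSubgroup_closure.mp (hspan h.1 h.2)
    have key : ∀ t ∈ AddSubgroup.closure
        ((Set.univ : Set R) * ({e.1} : Set R) * (Set.univ : Set R)),
        ∃ w : ↥W, Φ w.1 = t := by
      intro t htmem
      refine AddSubgroup.closure_induction ?_ ?_ ?_ ?_ htmem
      · rintro y ⟨w', ⟨u, -, z, hz, rfl⟩, v, -, rfl⟩
        rw [Set.mem_singleton_iff] at hz
        subst hz
        refine ⟨⟨u • ρ v (vv eM), W.smul_mem u (ρ_stab v _ (hvvW eM))⟩, ?_⟩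
        show Φ (u • ρ v (vv eM)) = u * e.1 * v
        rw [map_smul, ρ_vv, Φvv]
        show u • (e.1 * v) = u * e.1 * v
        rw [smul_eq_mul, mul_assoc]
      · exact ⟨0, by rw [Submodule.coe_zero, map_zero]⟩
      · rintro a b _ _ ⟨wa, hwa⟩ ⟨wb, hwb⟩
        exact ⟨wa + wb, by rw [Submodule.coe_add, map_add, hwa, hwb]⟩
      · rintro a _ ⟨wa, hwa⟩
        exact ⟨-wa, by rw [Submodule.coe_neg, map_neg, hwa]⟩
    obtain ⟨w, hw⟩ := key h.1 ht
    exact ⟨w, Subtype.ext hw⟩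
  -- split using right projectivity of H
  haveI : Module.Projective Rᵐᵒᵖ ↥H := hproj
  obtain ⟨σ, hσ⟩ := Module.projective_lifting_property ΦH LinearMap.id hsurj
  have hσfix : ∀ h : ↥H, ΦH (σ h) = h := by
    intro h
    have h9 := DFunLike.congr_fun hσ h
    simpa using h9
  -- every element of W is fixed by σ ∘ ΦH
  have τfix : ∀ w : ↥W, σ (ΦH w) = w := by
    have gen_fix : ∀ (a : R) (x : M),
        σ (ΦH ⟨a • vv x, W.smul_mem a (hvvW x)⟩) = ⟨a • vv x, W.smul_mem a (hvvW x)⟩ := by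
      intro a x
      set w' : ↥W := ⟨a • vv eM, W.smul_mem a (hvvW eM)⟩ with hw'
      have h2 : w' = (MulOpposite.op e.1) • w' := by
        apply Subtype.ext
        rw [smulW_val]
        show a • vv eM = ρ e.1 (a • vv eM)
        rw [map_smul, ρ_vv]
        have : mulR eM e.1 = eM := Subtype.ext e.2.eq
        rw [this]
      have h3 : σ (ΦH w') = w' := by
        set t : ↥W := σ (ΦH w') with htd
        have hte : t = (MulOpposite.op e.1) • t := by
          rw [htd]
          conv_lhs => rw [h2]
          rw [map_smul ΦH, map_smul σ]
        have hΦt : ΦH t = ΦH w' := by rw [htd, hσfix]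
        have htv : (t : M →₀ R) = ρ e.1 (t : M →₀ R) := by
          conv_lhs => rw [hte]
          exact smulW_val (MulOpposite.op e.1) t
        have hwv : (w' : M →₀ R) = ρ e.1 (w' : M →₀ R) := by
          conv_lhs => rw [h2]
          exact smulW_val (MulOpposite.op e.1) w'
        have hdv : (t : M →₀ R) - (w' : M →₀ R)
            = ρ e.1 ((t : M →₀ R) - (w' : M →₀ R)) := by
          conv_lhs => rw [htv, hwv]
          exact (map_sub (ρ e.1) _ _).symm
        have hΦdv : Φ ((t : M →₀ R) - (w' : M →₀ R)) = 0 := by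
          rw [map_sub]
          have h7 : Φ (t : M →₀ R) = Φ (w' : M →₀ R) := by
            have h8 : (ΦH t : R) = (ΦH w' : R) := congrArg Subtype.val hΦt
            rwa [ΦH_val, ΦH_val] at h8
          rw [h7, sub_self]
        have hzero : (t : M →₀ R) - (w' : M →₀ R) = 0 := by
          rw [hdv, ΦI3, hΦdv, zero_mul, zero_smul]
        exact Subtype.ext (sub_eq_zero.mp hzero)
      have h1 : (⟨a • vv x, W.smul_mem a (hvvW x)⟩ : ↥W) = (MulOpposite.op x.1) • w' := by
        apply Subtype.ext
        rw [smulW_val]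
        show a • vv x = ρ x.1 (a • vv eM)
        rw [map_smul, ρ_vv]
        have : mulR eM x.1 = x := Subtype.ext x.2
        rw [this]
      rw [h1, map_smul ΦH, map_smul σ, h3]
    intro w
    obtain ⟨n, a, g, hsum⟩ := Submodule.mem_span_set'.mp w.2
    choose x hx using fun i => (g i).2
    have hw : w = ∑ i, (⟨a i • vv (x i), W.smul_mem _ (hvvW _)⟩ : ↥W) := by
      apply Subtype.ext
      rw [← hsum]
      rw [Submodule.coe_sum]
      refine Finset.sum_congr rfl (fun i _ => ?_)
      rw [← hx i]
    rw [hw, map_sum, map_sum]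
    exact Finset.sum_congr rfl (fun i _ => gen_fix (a i) (x i))
  -- the R-linear version of ΦH
  set ΦHl : ↥W →ₗ[R] ↥H :=
    { toFun := fun w => ⟨Φ w.1, hΦW w.1 w.2⟩
      map_add' := fun u v => Subtype.ext (by
        show Φ (u.1 + v.1) = Φ u.1 + Φ v.1
        rw [map_add])
      map_smul' := fun a w => Subtype.ext (by
        show Φ (a • w.1) = a * Φ w.1
        rw [map_smul, smul_eq_mul]) } with hΦHl
  have hinj : Function.Injective ΦHl := by
    intro u v huv
    have h1 : ΦH u = ΦH v := by
      apply Subtype.ext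
      exact congrArg Subtype.val huv
    have h2 := τfix u
    rw [h1, τfix v] at h2
    exact h2.symm
  have hsurjl : Function.Surjective ΦHl := by
    intro h
    obtain ⟨w, hw⟩ := hsurj h
    exact ⟨w, Subtype.ext (congrArg Subtype.val hw)⟩
  set equiv : ↥W ≃ₗ[R] ↥H := LinearEquiv.ofBijective ΦHl ⟨hinj, hsurjl⟩ with hequiv
  -- conclude projectivity
  have hjH : ∀ j : M, j.1 ∈ H := by
    intro j
    have : j.1 = e.1 * j.1 := j.2.symm
    rw [this]
    exact H.mul_mem_right e.1 j.1 heH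
  set g : (M →₀ R) →ₗ[R] ↥H :=
    Finsupp.linearCombination R (fun j : M => (⟨j.1, hjH j⟩ : ↥H)) with hg
  have gval : ∀ c : M →₀ R, (g c : R) = Φ c := by
    intro c
    induction c using Finsupp.induction_linear with
    | zero => rw [map_zero, map_zero]; rfl
    | add f f' hf hf' =>
      rw [map_add, map_add, ← hf, ← hf']
      rfl
    | single j a =>
      rw [hg, hΦ, Finsupp.linearCombination_single, Finsupp.linearCombination_single]
      rfl
  set i : ↥H →ₗ[R] (M →₀ R) := W.subtype ∘ₗ equiv.symm.toLinearMap with hi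
  have hcomp : g ∘ₗ i = LinearMap.id := by
    refine LinearMap.ext fun h => ?_
    apply Subtype.ext
    rw [LinearMap.comp_apply, LinearMap.id_apply, hi, LinearMap.comp_apply]
    rw [gval]
    show Φ ((equiv.symm h : ↥W) : M →₀ R) = h.1
    have : Φ ((equiv.symm h : ↥W) : M →₀ R) = (ΦHl (equiv.symm h) : R) := rfl
    rw [this]
    have h8 : ΦHl (equiv.symm h) = equiv (equiv.symm h) := rfl
    rw [h8, LinearEquiv.apply_symm_apply]
  exact Module.Projective.of_split i g hcomp
end
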